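/- For any vertex algebra V and any V-module W, one has E_1(W) = C_2(W) and E_2(W) = C_3(W). -/
import Mathlib


open scoped DirectSum

noncomputable section


/-- Integer binomial coefficient `C(m, i)` for `m : ℤ`, `i : ℕ`. -/
def intBinom (m : ℤ) (i : ℕ) : ℤ :=
  (∏ j ∈ Finset.range i, (m - (j : ℤ))) / (i.factorial : ℤ)

/-- A vertex algebra over `ℂ`: a complex vector space `V` with a vacuum vector and a
linear state-field correspondence `Y`, `Y(v,x) = ∑ₙ vₙ x^{-n-1}`, satisfying
truncation, vacuum and creation properties, and Borcherds' commutator and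
iterate formulas. -/
structure VertexAlgebra (V : Type*) [AddCommGroup V] [Module ℂ V] where
  /-- the coefficients of vertex operators: `Y u n v = uₙ v`. -/
  Y : V →ₗ[ℂ] ℤ → Module.End ℂ V
  /-- the vacuum vector `𝟏`. -/
  vac : V
  trunc : ∀ u v : V, ∃ N : ℕ, ∀ n : ℤ, (N : ℤ) ≤ n → Y u n v = 0
  vac_act : ∀ (n : ℤ) (v : V), Y vac n v = if n = -1 then v else 0
  create : ∀ u : V, Y u (-1) vac = u
  create_nonneg : ∀ (u : V) (n : ℤ), 0 ≤ n → Y u n vac = 0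
  commutator : ∀ (u v w : V) (m n : ℤ),
    Y u m (Y v n w) - Y v n (Y u m w)
      = ∑ᶠ i : ℕ, intBinom m i • Y (Y u i v) (m + n - i) w
  iterate : ∀ (u v w : V) (m n : ℤ),
    Y (Y u m v) n w
      = ∑ᶠ i : ℕ, ((-1 : ℤ) ^ i * intBinom m i) •
          (Y u (m - i) (Y v (n + i) w)
            - ((((-1 : ℤˣ) ^ m : ℤˣ) : ℤ) • Y v (m + n - i) (Y u i w)))

/-- A module for a vertex algebra. -/
structure VAModule {V : Type*} [AddCommGroup V] [Module ℂ V] (va : VertexAlgebra V)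
    (W : Type*) [AddCommGroup W] [Module ℂ W] where
  /-- the action `act v n w = vₙ w`. -/
  act : V →ₗ[ℂ] ℤ → Module.End ℂ W
  trunc : ∀ (v : V) (w : W), ∃ N : ℕ, ∀ n : ℤ, (N : ℤ) ≤ n → act v n w = 0
  vac_act : ∀ (n : ℤ) (w : W), act va.vac n w = if n = -1 then w else 0
  commutator : ∀ (u v : V) (w : W) (m n : ℤ),
    act u m (act v n w) - act v n (act u m w)
      = ∑ᶠ i : ℕ, intBinom m i • act (va.Y u i v) (m + n - i) w
  iterate : ∀ (u v : V) (w : W) (m n : ℤ),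
    act (va.Y u m v) n w
      = ∑ᶠ i : ℕ, ((-1 : ℤ) ^ i * intBinom m i) •
          (act u (m - i) (act v (n + i) w)
            - ((((-1 : ℤˣ) ^ m : ℤˣ) : ℤ) • act v (m + n - i) (act u i w)))

variable {V : Type*} [AddCommGroup V] [Module ℂ V]

/-- The adjoint module of a vertex algebra. -/
def VertexAlgebra.adjoint (va : VertexAlgebra V) : VAModule va V where
  act := va.Y
  trunc := va.trunc
  vac_act := va.vac_act
  commutator := va.commutator
  iterate := va.iterate

variable {W : Type*} [AddCommGroup W] [Module ℂ W]

/-- `Efilt M n = E_n(W)`: the subspace of `W` spanned by the vectors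
`u⁽¹⁾_{-1-k₁} ⋯ u⁽ʳ⁾_{-1-k_r} w` for `r ≥ 1`, `u⁽ⁱ⁾ ∈ V`, `w ∈ W`, `kᵢ ≥ 0`,
`k₁ + ⋯ + k_r ≥ n`. -/
def Efilt {va : VertexAlgebra V} (M : VAModule va W) (n : ℤ) : Submodule ℂ W :=
  Submodule.span ℂ {x : W | ∃ (L : List (V × ℕ)) (w : W), L ≠ [] ∧
    n ≤ (L.map fun p => ((p.2 : ℤ))).sum ∧
    x = L.foldr (fun p acc => M.act p.1 (-1 - (p.2 : ℤ)) acc) w}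

/-- `Cfilt M n = C_n(W)`: the subspace of `W` spanned by the vectors `v_{-n} w`. -/
def Cfilt {va : VertexAlgebra V} (M : VAModule va W) (n : ℕ) : Submodule ℂ W :=
  Submodule.span ℂ {x : W | ∃ (v : V) (w : W), x = M.act v (-(n : ℤ)) w}

section Helpers

variable {V : Type*} [AddCommGroup V] [Module ℂ V]
variable {W : Type*} [AddCommGroup W] [Module ℂ W]
variable {va : VertexAlgebra V} (M : VAModule va W)

lemma intBinom_neg_one (i : ℕ) : intBinom (-1) i = (-1) ^ i := by
  have h : (∏ j ∈ Finset.range i, ((-1 : ℤ) - (j : ℤ))) = (-1) ^ i * (i.factorial : ℤ) := by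
    induction i with
    | zero => simp
    | succ n ih =>
      rw [Finset.prod_range_succ, ih, Nat.factorial_succ]
      push_cast; ring
  rw [intBinom, h, Int.mul_ediv_cancel]
  exact_mod_cast Nat.factorial_ne_zero i

lemma intBinom_neg_two (i : ℕ) : intBinom (-2) i = (-1) ^ i * (i + 1) := by
  have h : (∏ j ∈ Finset.range i, ((-2 : ℤ) - (j : ℤ)))
      = (-1) ^ i * ((i : ℤ) + 1) * (i.factorial : ℤ) := by
    induction i with
    | zero => simp
    | succ n ih =>
      rw [Finset.prod_range_succ, ih, Nat.factorial_succ]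
      push_cast; ring
  rw [intBinom, h, Int.mul_ediv_cancel]
  exact_mod_cast Nat.factorial_ne_zero i

lemma finsum_mem_submodule (p : Submodule ℂ W) (f : ℕ → W) (h : ∀ i, f i ∈ p) :
    (∑ᶠ i, f i) ∈ p := by
  by_cases hf : (Function.support f).Finite
  · rw [finsum_eq_sum f hf]
    exact Submodule.sum_mem _ fun i _ => h i
  · rw [finsum_of_infinite_support hf]
    exact p.zero_mem

/-- `(Tv)ₙ w = -n · v_{n-1} w` for `n ≤ -1`, where `Tv = v₋₂𝟏`. -/
lemma actT (v : V) (w : W) (n : ℤ) (hn : n ≤ -1) :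
    M.act (va.Y v (-2) va.vac) n w = (-n) • M.act v (n - 1) w := by
  have ha : (((-1 - n).toNat : ℕ) : ℤ) = -1 - n := Int.toNat_of_nonneg (by omega)
  rw [M.iterate v va.vac w (-2) n, finsum_eq_single _ ((-1 - n).toNat)]
  · simp only [M.vac_act]
    rw [if_pos (by omega), if_neg (by omega)]
    have e2 : (((-1 : ℤˣ) ^ (-2 : ℤ) : ℤˣ) : ℤ) = 1 := by decide
    rw [e2, intBinom_neg_two, one_smul, sub_zero]
    have hidx : (-2 : ℤ) - ((-1 - n).toNat : ℤ) = n - 1 := by omega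
    rw [hidx]
    have hc : ((-1 : ℤ) ^ ((-1 - n).toNat) * ((-1) ^ ((-1 - n).toNat)
        * (((-1 - n).toNat : ℤ) + 1))) = -n := by
      have h : ((-1 : ℤ) ^ ((-1 - n).toNat)) * ((-1 : ℤ) ^ ((-1 - n).toNat)) = 1 := by
        rw [← mul_pow]; norm_num
      calc ((-1 : ℤ) ^ ((-1 - n).toNat) * ((-1) ^ ((-1 - n).toNat)
            * (((-1 - n).toNat : ℤ) + 1)))
          = ((-1 : ℤ) ^ ((-1 - n).toNat) * (-1) ^ ((-1 - n).toNat))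
            * (((-1 - n).toNat : ℤ) + 1) := by ring
        _ = (((-1 - n).toNat : ℤ) + 1) := by rw [h, one_mul]
        _ = -n := by omega
    rw [hc]
  · intro b hb
    have hbz : (b : ℤ) ≠ -1 - n := fun h => hb (by omega)
    simp only [M.vac_act]
    rw [if_neg (by omega), if_neg (by omega)]
    simp

/-- `vₙ w ∈ C_m(W)` whenever `n ≤ -m`. -/
lemma act_mem_C (m : ℕ) (hm : 1 ≤ m) (v : V) (w : W) (n : ℤ) (hn : n ≤ -(m : ℤ)) :
    M.act v n w ∈ Cfilt M m := by
  obtain ⟨k, hk⟩ : ∃ k : ℕ, n = -(m : ℤ) - k := ⟨(-(m : ℤ) - n).toNat, by omega⟩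
  subst hk
  clear hn
  induction k generalizing v with
  | zero => exact Submodule.subset_span ⟨v, w, by norm_num⟩
  | succ k ih =>
    have hT := actT M v w (-(m : ℤ) - k) (by omega)
    have h1 : M.act (va.Y v (-2) va.vac) (-(m : ℤ) - k) w ∈ Cfilt M m := ih (va.Y v (-2) va.vac)
    rw [hT] at h1
    have hidx : (-(m : ℤ) - (k : ℤ) - 1) = -(m : ℤ) - ((k + 1 : ℕ) : ℤ) := by push_cast; ring
    have hc : (-(-(m : ℤ) - (k : ℤ))) = ((m + k : ℕ) : ℤ) := by push_cast; ring
    rw [hidx, hc] at h1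
    have key : (((m + k : ℕ) : ℤ) : ℂ) • M.act v (-(m : ℤ) - ((k + 1 : ℕ) : ℤ)) w
        ∈ Cfilt M m := by
      rw [Int.cast_smul_eq_zsmul]; exact h1
    have h2 := (Cfilt M m).smul_mem ((((m + k : ℕ) : ℤ) : ℂ))⁻¹ key
    rwa [inv_smul_smul₀ (by exact_mod_cast (by omega : (m + k : ℕ) ≠ 0))] at h2

/-- `C_m(W)` is stable under `u_j` for `j ≤ -1`. -/
lemma act_C_mem (m : ℕ) (hm : 1 ≤ m) (u : V) (j : ℤ) (hj : j ≤ -1) {x : W}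
    (hx : x ∈ Cfilt M m) : M.act u j x ∈ Cfilt M m := by
  induction hx using Submodule.span_induction with
  | mem x h =>
    obtain ⟨v, w, rfl⟩ := h
    have hc := M.commutator u v w j (-(m : ℤ))
    have heq : M.act u j (M.act v (-(m : ℤ)) w)
        = M.act v (-(m : ℤ)) (M.act u j w)
          + ∑ᶠ i : ℕ, intBinom j i • M.act (va.Y u i v) (j + -(m : ℤ) - i) w := by
      rw [← hc]; abel
    rw [heq]
    refine Submodule.add_mem _ (Submodule.subset_span ⟨v, _, rfl⟩)
      (finsum_mem_submodule _ _ fun i => ?_)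
    exact zsmul_mem (act_mem_C M m hm _ w _ (by omega)) _
  | zero => rw [map_zero]; exact (Cfilt M m).zero_mem
  | add x y hx hy ihx ihy => rw [map_add]; exact Submodule.add_mem _ ihx ihy
  | smul a x hx ihx => rw [map_smul]; exact Submodule.smul_mem _ a ihx

/-- The key computation: `u₋₂ v₋₂ w ∈ C₃(W)`. -/
lemma key23 (u v : V) (w : W) : M.act u (-2) (M.act v (-2) w) ∈ Cfilt M 3 := by
  classical
  have e1 : ∀ i : ℕ, ((-1 : ℤ) ^ i * intBinom (-1) i) = 1 := fun i => by
    rw [intBinom_neg_one, ← mul_pow]; norm_num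
  have e2 : (((-1 : ℤˣ) ^ (-1 : ℤ) : ℤˣ) : ℤ) = -1 := by decide
  set F : ℕ → W := fun i =>
    M.act u (-1 - (i : ℤ)) (M.act v (-3 + i) w) + M.act v (-1 + -3 - i) (M.act u i w)
    with hFdef
  have hiter : M.act (va.Y u (-1) v) (-3) w = ∑ᶠ i : ℕ, F i := by
    rw [M.iterate u v w (-1) (-3)]
    refine finsum_congr fun i => ?_
    rw [e1, e2, one_smul, neg_smul, one_smul, sub_neg_eq_add]
  obtain ⟨N1, hN1⟩ := M.trunc v w
  obtain ⟨N2, hN2⟩ := M.trunc u w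
  set N : ℕ := N1 + N2 + 3 with hN
  have hsupp : Function.support F ⊆ ↑(Finset.range N) := by
    intro i hi
    simp only [Finset.coe_range, Set.mem_Iio]
    by_contra hge
    push_neg at hge
    apply hi
    have hv : M.act v (-3 + (i : ℤ)) w = 0 := hN1 _ (by omega)
    have hu : M.act u (i : ℤ) w = 0 := hN2 _ (by omega)
    simp [hFdef, hv, hu]
  have hfs : ∑ᶠ i, F i = ∑ i ∈ Finset.range N, F i :=
    finsum_eq_sum_of_support_subset F hsupp
  have hmem : ∑ i ∈ Finset.range N, F i ∈ Cfilt M 3 := by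
    rw [← hfs, ← hiter]
    exact Submodule.subset_span ⟨va.Y u (-1) v, w, by norm_num⟩
  have h1N : (1 : ℕ) ∈ Finset.range N := by
    rw [Finset.mem_range]; omega
  rw [← Finset.add_sum_erase _ F h1N] at hmem
  have hFmem : ∀ i ∈ (Finset.range N).erase 1, F i ∈ Cfilt M 3 := by
    intro i hi
    have hi1 : i ≠ 1 := Finset.ne_of_mem_erase hi
    refine Submodule.add_mem _ ?_ (act_mem_C M 3 (by norm_num) v _ _ (by omega))
    rcases i with _ | _ | i
    · exact act_C_mem M 3 (by norm_num) u _ (by norm_num)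
        (act_mem_C M 3 (by norm_num) v w _ (by norm_num))
    · exact absurd rfl hi1
    · exact act_mem_C M 3 (by norm_num) u _ _ (by push_cast; omega)
  have hrest := Submodule.sum_mem (Cfilt M 3) hFmem
  have hF1 : F 1 ∈ Cfilt M 3 := by
    have h := Submodule.sub_mem _ hmem hrest
    simpa using h
  have hB1 : M.act v (-1 + -3 - ((1 : ℕ) : ℤ)) (M.act u ((1 : ℕ) : ℤ) w) ∈ Cfilt M 3 :=
    act_mem_C M 3 (by norm_num) v _ _ (by norm_num)
  have hfin := Submodule.sub_mem _ hF1 hB1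
  have : F 1 - M.act v (-1 + -3 - ((1 : ℕ) : ℤ)) (M.act u ((1 : ℕ) : ℤ) w)
      = M.act u (-2) (M.act v (-2) w) := by
    rw [hFdef]
    norm_num
  rwa [this] at hfin

lemma act2_C2 (u : V) {x : W} (hx : x ∈ Cfilt M 2) : M.act u (-2) x ∈ Cfilt M 3 := by
  induction hx using Submodule.span_induction with
  | mem x h =>
    obtain ⟨v, w, rfl⟩ := h
    have h2 : -((2 : ℕ) : ℤ) = (-2 : ℤ) := by norm_num
    rw [h2]
    exact key23 M u v w
  | zero => rw [map_zero]; exact (Cfilt M 3).zero_mem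
  | add x y hx hy ihx ihy => rw [map_add]; exact Submodule.add_mem _ ihx ihy
  | smul a x hx ihx => rw [map_smul]; exact Submodule.smul_mem _ a ihx

lemma main1 (L : List (V × ℕ)) (w : W) (hL : L ≠ [])
    (hs : 1 ≤ (L.map fun p => ((p.2 : ℤ))).sum) :
    L.foldr (fun p acc => M.act p.1 (-1 - (p.2 : ℤ)) acc) w ∈ Cfilt M 2 := by
  induction L generalizing w with
  | nil => simp at hL
  | cons p L' ih =>
    obtain ⟨u, k⟩ := p
    simp only [List.foldr_cons]
    rcases Nat.eq_zero_or_pos k with hk | hk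
    · subst hk
      have hs' : 1 ≤ (L'.map fun p => ((p.2 : ℤ))).sum := by simpa using hs
      have hne : L' ≠ [] := by rintro rfl; simp at hs'
      exact act_C_mem M 2 (by norm_num) u _ (by norm_num) (ih w hne hs')
    · exact act_mem_C M 2 (by norm_num) u _ _ (by omega)

lemma main2 (L : List (V × ℕ)) (w : W) (hL : L ≠ [])
    (hs : 2 ≤ (L.map fun p => ((p.2 : ℤ))).sum) :
    L.foldr (fun p acc => M.act p.1 (-1 - (p.2 : ℤ)) acc) w ∈ Cfilt M 3 := by
  induction L generalizing w with
  | nil => simp at hL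
  | cons p L' ih =>
    obtain ⟨u, k⟩ := p
    simp only [List.foldr_cons]
    rcases k with _ | _ | n
    · have hs' : 2 ≤ (L'.map fun p => ((p.2 : ℤ))).sum := by simpa using hs
      have hne : L' ≠ [] := by rintro rfl; simp at hs'
      exact act_C_mem M 3 (by norm_num) u _ (by norm_num) (ih w hne hs')
    · have hs' : 1 ≤ (L'.map fun p => ((p.2 : ℤ))).sum := by
        simp only [List.map_cons, List.sum_cons] at hs; omega
      have hne : L' ≠ [] := by rintro rfl; simp at hs'
      have hy := main1 M L' w hne hs'
      have h2 : (-1 : ℤ) - ((1 : ℕ) : ℤ) = -2 := by norm_num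
      rw [h2]
      exact act2_C2 M u hy
    · exact act_mem_C M 3 (by norm_num) u _ _ (by push_cast; omega)

end Helpers

/-- **Corollary 3.6 (ce1e2).** For any vertex algebra `V` and any `V`-module `W`,
`E₁(W) = C₂(W)` and `E₂(W) = C₃(W)`. -/
theorem stmt10 {V : Type*} [AddCommGroup V] [Module ℂ V] {W : Type*} [AddCommGroup W]
    [Module ℂ W] (va : VertexAlgebra V) (M : VAModule va W) :
    Efilt M 1 = Cfilt M 2 ∧ Efilt M 2 = Cfilt M 3 := by
  constructor
  · apply le_antisymm
    · exact Submodule.span_le.mpr (by rintro x ⟨L, w, hne, hs, rfl⟩; exact main1 M L w hne hs)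
    · refine Submodule.span_le.mpr ?_
      rintro x ⟨v, w, rfl⟩
      refine Submodule.subset_span ⟨[(v, 1)], w, by simp, by simp, by norm_num⟩
  · apply le_antisymm
    · exact Submodule.span_le.mpr (by rintro x ⟨L, w, hne, hs, rfl⟩; exact main2 M L w hne hs)
    · refine Submodule.span_le.mpr ?_
      rintro x ⟨v, w, rfl⟩
      refine Submodule.subset_span ⟨[(v, 2)], w, by simp, by simp, by norm_num⟩


end
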